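/- Let S ⊂ P(ℝ^d) be an open projective simplex of dimension k ≥ 1 equipped with its Hilbert metric H_S, and let g ∈ Aut(S) fix every vertex of S. Then every point of S realizes the minimal translation length of g: H_S(x, gx) = inf_{y ∈ S} H_S(y, gy) for all x ∈ S. -/

import Mathlib

open Matrix Topology Filter
open scoped MatrixGroups

noncomputable section

abbrev Vd (d : ℕ) := Fin d → ℝ
abbrev Md (d : ℕ) := Matrix (Fin d) (Fin d) ℝ

open scoped Classical in
/-- The multiset of absolute values of the complex eigenvalues (roots of the
characteristic polynomial over `ℂ`, with multiplicity) of a real `d × d` matrix. -/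
def eigMods {d : ℕ} (g : Md d) : Multiset ℝ :=
  ((g.charpoly.map (algebraMap ℝ ℂ)).roots).map (fun z => ‖z‖)

open scoped Classical in
/-- `g` is proximal: the largest modulus of an eigenvalue is attained exactly once. -/
def IsProximal {d : ℕ} (g : Md d) : Prop :=
  ∃ r ∈ eigMods g, (eigMods g).count r = 1 ∧ ∀ s ∈ eigMods g, s ≤ r

/-- `ℓ` is the attracting eigenline of `g`: the eigenspace of a real eigenvalue of
maximal modulus, of dimension one. -/
def IsTopEigenline {d : ℕ} (g : Md d) (ℓ : Submodule ℝ (Vd d)) : Prop :=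
  ∃ μ : ℝ, (∀ s ∈ eigMods g, s ≤ |μ|) ∧
    ℓ = Module.End.eigenspace (Matrix.toLin' g) μ ∧ Module.finrank ℝ ℓ = 1

/-- `C` is the cone over a properly convex domain `Ω ⊂ P(ℝ^d)`: an open convex
cone, nonempty, whose closure contains no line (salient). -/
def IsProperCone {d : ℕ} (C : Set (Vd d)) : Prop :=
  IsOpen C ∧ Convex ℝ C ∧ C.Nonempty ∧
    (∀ v ∈ C, ∀ t : ℝ, 0 < t → t • v ∈ C) ∧
    (∀ v ∈ closure C, -v ∈ closure C → v = 0)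

/-- `g` induces an automorphism of the properly convex domain with cone `C`. -/
def ConeAut {d : ℕ} (C : Set (Vd d)) (g : Md d) : Prop :=
  IsUnit g ∧ (fun v => g.mulVec v) '' C = C

/-- Gauge `M(u/v) = inf{t > 0 : t v - u ∈ closure C}`. -/
def gaugeM {d : ℕ} (C : Set (Vd d)) (u v : Vd d) : ℝ :=
  sInf {t : ℝ | 0 < t ∧ t • v - u ∈ closure C}

/-- The Hilbert distance between the projective points `[u]`, `[v]` of the properly
convex domain with cone `C` : `H([u],[v]) = (1/2) log (M(u/v) M(v/u))`. -/
def hilbertDist {d : ℕ} (C : Set (Vd d)) (u v : Vd d) : ℝ :=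
  (1/2) * Real.log (gaugeM C u v * gaugeM C v u)

/-- The closed projective segment `[[u],[v]]` is contained in `∂Ω`. -/
def BSeg {d : ℕ} (C : Set (Vd d)) (u v : Vd d) : Prop :=
  ∀ s t : ℝ, 0 ≤ s → 0 ≤ t → s • u + t • v ∉ C

/-- `[v]` belongs to the open face `F_Ω([u])`: either `[v] = [u]`, or some open
projective segment contained in `closure Ω` contains both `[u]` and `[v]`. -/
def InFace {d : ℕ} (C : Set (Vd d)) (u v : Vd d) : Prop :=
  v ∈ closure C ∧ ((∃ t : ℝ, 0 < t ∧ v = t • u) ∨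
    ∃ ε : ℝ, 0 < ε ∧ u - ε • v ∈ closure C ∧ v - ε • u ∈ closure C)

/-- `[v]` is an extreme point of `closure Ω`: it is not in the interior of any
nondegenerate projective segment contained in `closure Ω`. -/
def IsExtremePt {d : ℕ} (C : Set (Vd d)) (v : Vd d) : Prop :=
  v ∈ closure C ∧ v ≠ 0 ∧ ∀ a ∈ closure C, ∀ b ∈ closure C,
    ∀ s t : ℝ, 0 < s → 0 < t → v = s • a + t • b → ∃ c : ℝ, a = c • b


/-- The quotient topology on the projective space `P(V)`. -/
instance projTopology {K V : Type*} [DivisionRing K] [AddCommGroup V] [Module K V]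
    [TopologicalSpace V] : TopologicalSpace (Projectivization K V) :=
  inferInstanceAs (TopologicalSpace (Quotient (projectivizationSetoid K V)))

/-- The set of projective points with a representative in `A`. -/
def projSet {d : ℕ} (A : Set (Vd d)) : Set (Projectivization ℝ (Vd d)) :=
  {x | ∃ (v : Vd d) (hv : v ≠ 0), v ∈ A ∧ x = Projectivization.mk ℝ v hv}

/-- The action of `γ ∈ GL(d,ℝ)` on the projective space `P(ℝ^d)`. -/
def pAct {d : ℕ} (γ : GL (Fin d) ℝ) : Projectivization ℝ (Vd d) → Projectivization ℝ (Vd d) :=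
  Projectivization.map (Matrix.toLin' (↑γ : Md d)) (by
    have : Function.LeftInverse (Matrix.toLin' (↑γ⁻¹ : Md d)) (Matrix.toLin' (↑γ : Md d)) := by
      intro v
      simp only [Matrix.toLin'_apply, Matrix.mulVec_mulVec]
      rw [Matrix.coe_units_inv, Matrix.nonsing_inv_mul _ ((Matrix.isUnit_iff_isUnit_det _).mp γ.isUnit), Matrix.one_mulVec]
    exact this.injective)

/-- `T` lies in the closure of `Λ` in `P(End(ℝ^d))`. -/
def InEndClosure {d : ℕ} (Λ : Set (Md d)) (T : Md d) : Prop :=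
  T ≠ 0 ∧ ∃ (g : ℕ → Md d) (c : ℕ → ℝ), (∀ n, g n ∈ Λ) ∧
    Tendsto (fun n => c n • g n) atTop (nhds T)



section StmtSixAux

def myC0 (d k : ℕ) : Set (Vd d) :=
  {v | (∀ i : Fin d, (i:ℕ) ≤ k → 0 < v i) ∧ ∀ i : Fin d, k < (i:ℕ) → v i = 0}

lemma closure_myC0 (d k : ℕ) :
    closure (myC0 d k) =
      {v : Vd d | (∀ i : Fin d, (i:ℕ) ≤ k → 0 ≤ v i) ∧ ∀ i : Fin d, k < (i:ℕ) → v i = 0} := by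
  apply Set.Subset.antisymm
  · apply closure_minimal
    · intro v hv
      exact ⟨fun i hi => (hv.1 i hi).le, hv.2⟩
    · have he : {v : Vd d | (∀ i : Fin d, (i:ℕ) ≤ k → 0 ≤ v i) ∧ ∀ i : Fin d, k < (i:ℕ) → v i = 0}
          = (⋂ i : Fin d, ⋂ _ : (i:ℕ) ≤ k, {v : Vd d | 0 ≤ v i}) ∩
            (⋂ i : Fin d, ⋂ _ : k < (i:ℕ), {v : Vd d | v i = 0}) := by
        ext v; simp [Set.mem_iInter, Set.mem_setOf_eq]
      rw [he]
      exact ((isClosed_iInter fun i => isClosed_iInter fun _ =>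
          isClosed_le continuous_const (continuous_apply i)).inter
        (isClosed_iInter fun i => isClosed_iInter fun _ =>
          isClosed_eq (continuous_apply i) continuous_const))
  · intro v hv
    set w : Vd d := fun i => if (i:ℕ) ≤ k then 1 else 0 with hw
    have hwC : ∀ t : ℝ, 0 < t → v + t • w ∈ myC0 d k := by
      intro t ht
      constructor
      · intro i hi
        have h1 : (v + t • w) i = v i + t := by simp [hw, hi]
        rw [h1]; linarith [hv.1 i hi]
      · intro i hi
        have h1 : (v + t • w) i = v i := by
          simp [hw, Nat.not_le.mpr hi]
        rw [h1]; exact hv.2 i hi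
    have h0 : Tendsto (fun n : ℕ => (1 : ℝ) / ((n:ℝ) + 1)) atTop (nhds 0) :=
      tendsto_one_div_add_atTop_nhds_zero_nat
    have htend : Tendsto (fun n : ℕ => v + ((1:ℝ) / ((n:ℝ)+1)) • w) atTop (nhds v) := by
      have := (h0.smul_const w)
      rw [zero_smul] at this
      simpa using tendsto_const_nhds.add this
    exact mem_closure_of_tendsto htend (Filter.Eventually.of_forall fun n => hwC _ (by positivity))

def mulVecEquiv {d : ℕ} (h : GL (Fin d) ℝ) : Vd d ≃ₗ[ℝ] Vd d :=
  LinearEquiv.ofLinear ((↑h : Md d).mulVecLin) ((↑h⁻¹ : Md d).mulVecLin)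
    (by rw [← Matrix.mulVecLin_mul]; simp [Matrix.coe_units_inv,
      Matrix.mul_nonsing_inv _ ((Matrix.isUnit_iff_isUnit_det _).mp h.isUnit)])
    (by rw [← Matrix.mulVecLin_mul]; simp [Matrix.coe_units_inv,
      Matrix.nonsing_inv_mul _ ((Matrix.isUnit_iff_isUnit_det _).mp h.isUnit)])

lemma mulVec_injective {d : ℕ} (h : GL (Fin d) ℝ) :
    Function.Injective (fun v => (↑h : Md d).mulVec v) :=
  (mulVecEquiv h).injective

lemma closure_image_mulVec {d : ℕ} (h : GL (Fin d) ℝ) (A : Set (Vd d)) :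
    closure ((fun v => (↑h : Md d).mulVec v) '' A)
      = (fun v => (↑h : Md d).mulVec v) '' closure A := by
  have he := ((mulVecEquiv h).toContinuousLinearEquiv.toHomeomorph.image_closure A)
  have hc : ⇑(mulVecEquiv h).toContinuousLinearEquiv.toHomeomorph
      = fun v => (↑h : Md d).mulVec v := rfl
  rw [hc] at he
  exact he.symm

open Finset in
lemma gauge_formula {d k : ℕ} (hkd : k < d) (h : GL (Fin d) ℝ)
    (hK : (Finset.univ.filter (fun i : Fin d => (i:ℕ) ≤ k)).Nonempty)
    (a b : Vd d) (ha : a ∈ myC0 d k) (hb : b ∈ myC0 d k) :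
    gaugeM ((fun v => (↑h : Md d).mulVec v) '' myC0 d k)
      ((↑h : Md d).mulVec a) ((↑h : Md d).mulVec b)
      = (Finset.univ.filter (fun i : Fin d => (i:ℕ) ≤ k)).sup' hK (fun i => a i / b i) := by
  set K := Finset.univ.filter (fun i : Fin d => (i:ℕ) ≤ k) with hKdef
  set M := K.sup' hK (fun i => a i / b i) with hM
  have hd0 : 0 < d := lt_of_le_of_lt (Nat.zero_le k) hkd
  have hi0 : (⟨0, hd0⟩ : Fin d) ∈ K := by simp [hKdef]
  have hMpos : 0 < M := lt_of_lt_of_le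
    (div_pos (ha.1 ⟨0, hd0⟩ (Nat.zero_le k)) (hb.1 ⟨0, hd0⟩ (Nat.zero_le k)))
    (Finset.le_sup' (fun i => a i / b i) hi0)
  have hset : {t : ℝ | 0 < t ∧ t • (↑h : Md d).mulVec b - (↑h : Md d).mulVec a ∈
      closure ((fun v => (↑h : Md d).mulVec v) '' myC0 d k)} = Set.Ici M := by
    ext t
    rw [closure_image_mulVec]
    have hlin : t • (↑h : Md d).mulVec b - (↑h : Md d).mulVec a
        = (↑h : Md d).mulVec (t • b - a) := by
      rw [Matrix.mulVec_sub, Matrix.mulVec_smul]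
    rw [Set.mem_setOf_eq, hlin,
      Function.Injective.mem_set_image (mulVec_injective h) (s := closure (myC0 d k))]
    rw [closure_myC0]
    constructor
    · rintro ⟨ht, h1, -⟩
      rw [Set.mem_Ici, hM]
      apply Finset.sup'_le
      intro i hi
      have hik : (i:ℕ) ≤ k := by simpa [hKdef] using hi
      have := h1 i hik
      have hbi := hb.1 i hik
      rw [div_le_iff₀ hbi]
      simpa [Pi.sub_apply, Pi.smul_apply, smul_eq_mul, sub_nonneg, mul_comm] using this
    · intro htM
      rw [Set.mem_Ici] at htM
      have ht : 0 < t := lt_of_lt_of_le hMpos htM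
      refine ⟨ht, ?_, ?_⟩
      · intro i hik
        have hle : a i / b i ≤ t :=
          le_trans (Finset.le_sup' (fun i => a i / b i) (by simp [hKdef, hik] : i ∈ K)) htM
        have hbi := hb.1 i hik
        rw [div_le_iff₀ hbi] at hle
        simpa [Pi.sub_apply, Pi.smul_apply, smul_eq_mul, sub_nonneg, mul_comm] using hle
      · intro i hik
        simp [Pi.sub_apply, Pi.smul_apply, ha.2 i hik, hb.2 i hik]
  rw [gaugeM, hset, csInf_Ici]

lemma sum_single_smul {d : ℕ} (a : Vd d) : ∑ i, a i • (Pi.single i 1 : Vd d) = a := by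
  funext j
  simp [Pi.single_apply, Finset.sum_apply]

lemma gaction {d k : ℕ} (h : GL (Fin d) ℝ) (g : Md d) (μ : Fin d → ℝ)
    (hμ : ∀ i : Fin d, (i:ℕ) ≤ k →
      g.mulVec ((↑h : Md d).mulVec (Pi.single i 1)) = μ i • (↑h : Md d).mulVec (Pi.single i 1))
    (a : Vd d) (ha : ∀ i : Fin d, k < (i:ℕ) → a i = 0) :
    g.mulVec ((↑h : Md d).mulVec a) = (↑h : Md d).mulVec (fun i => μ i * a i) := by
  have hmv : ∀ (M : Md d) (b : Vd d), M.mulVec b = M.mulVecLin b := fun _ _ => rfl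
  calc g.mulVec ((↑h : Md d).mulVec a)
      = ∑ i, (μ i * a i) • (↑h : Md d).mulVecLin (Pi.single i 1) := by
        conv_lhs => rw [hmv, hmv, ← sum_single_smul a, map_sum, map_sum]
        refine Finset.sum_congr rfl fun i _ => ?_
        rw [_root_.map_smul, _root_.map_smul]
        by_cases hik : (i:ℕ) ≤ k
        · rw [← hmv, ← hmv, hμ i hik, smul_smul, mul_comm (a i) (μ i)]
        · rw [ha i (Nat.lt_of_not_le hik)]
          simp
    _ = (↑h : Md d).mulVecLin (∑ i, (μ i * a i) • (Pi.single i 1 : Vd d)) := by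
        rw [map_sum]
        refine Finset.sum_congr rfl fun i _ => ?_
        rw [_root_.map_smul]
    _ = (↑h : Md d).mulVec (fun i => μ i * a i) := by
        rw [sum_single_smul (fun i => μ i * a i)]
        rfl

end StmtSixAux

/-- if `g` is an automorphism of an open projective `k`-simplex `S`
(`k ≥ 1`) fixing every vertex, then every point of `S` realizes the minimal
translation length of `g` for the Hilbert metric, i.e. `x ↦ H_S(x, gx)` attains its
infimum at every point (equivalently is constant). -/
theorem stmt6 {d k : ℕ} (hk : 1 ≤ k) (hkd : k < d) (h : GL (Fin d) ℝ)
    (C : Set (Vd d))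
    (hC : C = (fun v => (↑h : Md d).mulVec v) ''
      {v : Vd d | (∀ i : Fin d, (i : ℕ) ≤ k → 0 < v i) ∧ ∀ i : Fin d, k < (i : ℕ) → v i = 0})
    (g : Md d) (hg : ConeAut C g)
    (hfix : ∀ i : Fin d, (i : ℕ) ≤ k → ∃ μ : ℝ, μ ≠ 0 ∧
      g.mulVec ((↑h : Md d).mulVec (Pi.single i 1)) = μ • (↑h : Md d).mulVec (Pi.single i 1)) :
    ∀ u ∈ C, ∀ w ∈ C, hilbertDist C u (g.mulVec u) ≤ hilbertDist C w (g.mulVec w) := by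
  classical
  have hCeq : C = (fun v => (↑h : Md d).mulVec v) '' myC0 d k := hC
  have hd0 : 0 < d := lt_of_le_of_lt (Nat.zero_le k) hkd
  set K := Finset.univ.filter (fun i : Fin d => (i:ℕ) ≤ k) with hKdef
  have hK : K.Nonempty := ⟨⟨0, hd0⟩, by simp [hKdef]⟩
  -- extract eigenvalues
  choose μ0 hμ0ne hμ0eq using hfix
  set μ : Fin d → ℝ := fun i => if hi : (i:ℕ) ≤ k then μ0 i hi else 1 with hμdef
  have hμeq : ∀ i : Fin d, (i:ℕ) ≤ k →
      g.mulVec ((↑h : Md d).mulVec (Pi.single i 1)) = μ i • (↑h : Md d).mulVec (Pi.single i 1) := by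
    intro i hi
    rw [hμdef]
    simp only [dif_pos hi]
    exact hμ0eq i hi
  -- positivity of eigenvalues
  have hμpos : ∀ i : Fin d, (i:ℕ) ≤ k → 0 < μ i := by
    intro i hi
    set χ : Vd d := fun j => if (j:ℕ) ≤ k then 1 else 0 with hχ
    have hχC0 : χ ∈ myC0 d k := by
      constructor
      · intro j hj; simp [hχ, hj]
      · intro j hj; simp [hχ, Nat.not_le.mpr hj]
    have hu : (↑h : Md d).mulVec χ ∈ C := by
      rw [hCeq]; exact Set.mem_image_of_mem _ hχC0
    have hgu : g.mulVec ((↑h : Md d).mulVec χ) ∈ C := by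
      rw [← hg.2]
      exact Set.mem_image_of_mem _ hu
    have hact : g.mulVec ((↑h : Md d).mulVec χ)
        = (↑h : Md d).mulVec (fun j => μ j * χ j) :=
      gaction h g μ hμeq χ (fun j hj => by simp [hχ, Nat.not_le.mpr hj])
    rw [hact, hCeq] at hgu
    obtain ⟨b, hb, hbe⟩ := hgu
    have hbμ : b = fun j => μ j * χ j := mulVec_injective h hbe
    rw [hbμ] at hb
    have := hb.1 i hi
    simpa [hχ, hi] using this
  -- key: Hilbert displacement is constant
  have key : ∀ u ∈ C, hilbertDist C u (g.mulVec u)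
      = (1/2) * Real.log (K.sup' hK (fun i => (μ i)⁻¹) * K.sup' hK μ) := by
    intro u hu
    rw [hCeq] at hu
    obtain ⟨a, ha, rfl⟩ := hu
    have hact : g.mulVec ((↑h : Md d).mulVec a)
        = (↑h : Md d).mulVec (fun j => μ j * a j) :=
      gaction h g μ hμeq a ha.2
    have ha' : (fun j => μ j * a j) ∈ myC0 d k := by
      constructor
      · intro j hj; exact mul_pos (hμpos j hj) (ha.1 j hj)
      · intro j hj; show μ j * a j = 0; rw [ha.2 j hj, mul_zero]
    have h1 : gaugeM C ((↑h : Md d).mulVec a) (g.mulVec ((↑h : Md d).mulVec a))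
        = K.sup' hK (fun i => (μ i)⁻¹) := by
      rw [hact, hCeq, gauge_formula hkd h hK a _ ha ha']
      apply Finset.sup'_congr hK rfl
      intro i hi
      have hik : (i:ℕ) ≤ k := by simpa [hKdef] using hi
      have hai : a i ≠ 0 := (ha.1 i hik).ne'
      rw [mul_comm, ← div_div, div_self hai, one_div]
    have h2 : gaugeM C (g.mulVec ((↑h : Md d).mulVec a)) ((↑h : Md d).mulVec a)
        = K.sup' hK μ := by
      rw [hact, hCeq, gauge_formula hkd h hK _ a ha' ha]
      apply Finset.sup'_congr hK rfl
      intro i hi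
      have hik : (i:ℕ) ≤ k := by simpa [hKdef] using hi
      have hai : a i ≠ 0 := (ha.1 i hik).ne'
      exact mul_div_cancel_right₀ (μ i) hai
    rw [hilbertDist, h1, h2]
  intro u hu w hw
  rw [key u hu, key w hw]

end
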